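/- arXiv:1807.11903 — 2 statements merged into one kernel-verified Lean document; each statement's English description precedes it below -/
import Mathlib

section
/- Let E be the complexification of a real non-circular ellipse and let T_β denote the tangent line to E at a point β of E lying on the line at infinity. Then a line B through β with B ≠ T_β cannot satisfy that both B and the infinity line are invariant under reflection with respect to T_β unless B = T_β; consequently, if β is an infinite point of E and B is a line through β that reflects to itself under the reflection with respect to T_β, then B = T_β. -/
/-- Let E be the complexified non-circular ellipse b²x² + a²y² = a²b²z² and
β = [d₁:d₂:0] an infinite point of E (so b²d₁² + a²d₂² = 0, d ≠ 0). Let T be (the affine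
part of) the tangent line to E at β, and B a line through β, i.e. an affine line with
direction d. If σ is a reflection with respect to T (a nontrivial affine complex-isometric
involution fixing T pointwise) and B is invariant under σ, then B = T. -/
theorem line_through_infinite_point_fixed_by_reflection (a b : ℝ) (ha : 0 < a)
    (hb : 0 < b) (hab : a ≠ b) (d : ℂ × ℂ) (hd : d ≠ 0)
    (hβ : (b : ℂ) ^ 2 * d.1 ^ 2 + (a : ℂ) ^ 2 * d.2 ^ 2 = 0)
    (T : Set (ℂ × ℂ))
    (hT : T = {q : ℂ × ℂ | (b : ℂ) ^ 2 * d.1 * q.1 + (a : ℂ) ^ 2 * d.2 * q.2 = 0})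
    (p₀ : ℂ × ℂ) (B : Set (ℂ × ℂ)) (hB : B = {w : ℂ × ℂ | ∃ t : ℂ, w = p₀ + t • d})
    (σ : ℂ × ℂ → ℂ × ℂ)
    (hiso : ∃ (M : (ℂ × ℂ) →ₗ[ℂ] ℂ × ℂ) (c : ℂ × ℂ),
      (∀ w : ℂ × ℂ, σ w = M w + c) ∧
      (∀ w₁ w₂ : ℂ × ℂ,
        (M w₁).1 * (M w₂).1 + (M w₁).2 * (M w₂).2 = w₁.1 * w₂.1 + w₁.2 * w₂.2))
    (hinv : σ ∘ σ = id) (hne : σ ≠ id) (hfix : ∀ q ∈ T, σ q = q)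
    (hBfix : σ '' B = B) :
    B = T := by
  obtain ⟨M, c, hσ, hM⟩ := hiso
  have ha0 : (a : ℂ) ≠ 0 := by exact_mod_cast ha.ne'
  have hb0 : (b : ℂ) ≠ 0 := by exact_mod_cast hb.ne'
  -- d.1 ≠ 0 and d.2 ≠ 0
  have hd1 : d.1 ≠ 0 := by
    intro h
    have h2 : (a : ℂ) ^ 2 * d.2 ^ 2 = 0 := by
      rw [h] at hβ; linear_combination hβ
    rcases mul_eq_zero.mp h2 with h' | h'
    · exact pow_ne_zero 2 ha0 h'
    · exact hd (Prod.ext h (pow_eq_zero_iff (two_ne_zero) |>.mp h'))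
  have hd2 : d.2 ≠ 0 := by
    intro h
    have h2 : (b : ℂ) ^ 2 * d.1 ^ 2 = 0 := by
      rw [h] at hβ; linear_combination hβ
    rcases mul_eq_zero.mp h2 with h' | h'
    · exact pow_ne_zero 2 hb0 h'
    · exact hd1 (pow_eq_zero_iff (two_ne_zero) |>.mp h')
  -- the direction d is non-isotropic since a ≠ b
  have hs : d.1 ^ 2 + d.2 ^ 2 ≠ 0 := by
    intro h
    have h1 : ((b : ℂ) ^ 2 - (a : ℂ) ^ 2) * d.1 ^ 2 = 0 := by
      linear_combination hβ - (a : ℂ) ^ 2 * h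
    rcases mul_eq_zero.mp h1 with h' | h'
    · have : (b : ℂ) ^ 2 = (a : ℂ) ^ 2 := by linear_combination h'
      have hba : b ^ 2 = a ^ 2 := by exact_mod_cast this
      exact hab (by nlinarith)
    · exact pow_ne_zero 2 hd1 h'
  -- σ is linear : c = 0
  have hc : c = 0 := by
    have h0T : (0 : ℂ × ℂ) ∈ T := by rw [hT]; simp
    have h0 := hfix 0 h0T
    rw [hσ] at h0
    simpa using h0
  have hσM : ∀ w, σ w = M w := by intro w; rw [hσ, hc, add_zero]
  -- M fixes d
  have hMd : M d = d := by
    have hdT : d ∈ T := by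
      rw [hT]
      show (b : ℂ) ^ 2 * d.1 * d.1 + (a : ℂ) ^ 2 * d.2 * d.2 = 0
      linear_combination hβ
    have := hfix d hdT
    rwa [hσM] at this
  -- the orthogonal direction e
  set e : ℂ × ℂ := (d.2, -d.1) with he
  -- decomposition of any vector in the basis d, e
  have hdecomp : ∀ w : ℂ × ℂ,
      w = ((w.1 * d.1 + w.2 * d.2) / (d.1 ^ 2 + d.2 ^ 2)) • d
          + ((w.1 * d.2 - w.2 * d.1) / (d.1 ^ 2 + d.2 ^ 2)) • e := by
    intro w
    have h1 : w.1 = ((w.1 * d.1 + w.2 * d.2) / (d.1 ^ 2 + d.2 ^ 2)) * d.1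
        + ((w.1 * d.2 - w.2 * d.1) / (d.1 ^ 2 + d.2 ^ 2)) * d.2 := by
      field_simp
      ring
    have h2 : w.2 = ((w.1 * d.1 + w.2 * d.2) / (d.1 ^ 2 + d.2 ^ 2)) * d.2
        + ((w.1 * d.2 - w.2 * d.1) / (d.1 ^ 2 + d.2 ^ 2)) * (-d.1) := by
      field_simp
      ring
    exact Prod.ext (by simpa using h1) (by simpa [he] using h2)
  -- M e = e or M e = -e
  have horth : d.1 * (M e).1 + d.2 * (M e).2 = 0 := by
    have h1 := hM d e
    rw [hMd] at h1
    rw [h1]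
    show d.1 * d.2 + d.2 * (-d.1) = 0
    ring
  have hnorm : (M e).1 ^ 2 + (M e).2 ^ 2 = d.1 ^ 2 + d.2 ^ 2 := by
    have h1 := hM e e
    have h2 : e.1 * e.1 + e.2 * e.2 = d.1 ^ 2 + d.2 ^ 2 := by
      show d.2 * d.2 + (-d.1) * (-d.1) = d.1 ^ 2 + d.2 ^ 2
      ring
    rw [h2] at h1
    linear_combination h1
  have hu2sq : (M e).2 ^ 2 = d.1 ^ 2 := by
    have key : ((M e).2 ^ 2 - d.1 ^ 2) * (d.1 ^ 2 + d.2 ^ 2) = 0 := by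
      linear_combination d.1 ^ 2 * hnorm - (d.1 * (M e).1 - d.2 * (M e).2) * horth
    exact sub_eq_zero.mp ((mul_eq_zero.mp key).resolve_right hs)
  have hMe : M e = e ∨ M e = -e := by
    have hfac : ((M e).2 - (-d.1)) * ((M e).2 - d.1) = 0 := by
      linear_combination hu2sq
    rcases mul_eq_zero.mp hfac with h' | h'
    · -- (M e).2 = -d.1 : M e = e
      left
      have h2 : (M e).2 = -d.1 := by linear_combination h'
      have h1 : (M e).1 = d.2 := by
        have := horth
        rw [h2] at this
        have hx : d.1 * (M e).1 = d.1 * d.2 := by linear_combination this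
        exact mul_left_cancel₀ hd1 hx
      exact Prod.ext (by simpa using h1) (by simpa using h2)
    · -- (M e).2 = d.1 : M e = -e
      right
      have h2 : (M e).2 = d.1 := by linear_combination h'
      have h1 : (M e).1 = -d.2 := by
        have := horth
        rw [h2] at this
        have hx : d.1 * (M e).1 = d.1 * (-d.2) := by linear_combination this
        exact mul_left_cancel₀ hd1 hx
      refine Prod.ext (by simpa using h1) ?_
      show (M e).2 = -(-d.1)
      rw [h2]; ring
  rcases hMe with hMe | hMe
  · -- then σ = id, contradiction
    exfalso
    apply hne
    funext w
    have : M w = w := by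
      conv_lhs => rw [hdecomp w]
      rw [map_add, map_smul, map_smul, hMd, hMe]
      exact (hdecomp w).symm
    rw [hσM, this]; rfl
  · -- the genuine reflection case
    set α : ℂ := (p₀.1 * d.1 + p₀.2 * d.2) / (d.1 ^ 2 + d.2 ^ 2) with hα
    set β : ℂ := (p₀.1 * d.2 - p₀.2 * d.1) / (d.1 ^ 2 + d.2 ^ 2) with hβ'
    have hMp0 : M p₀ = α • d - β • e := by
      conv_lhs => rw [hdecomp p₀]
      rw [map_add, map_smul, map_smul, hMd, hMe, smul_neg]
      abel
    -- σ p₀ ∈ B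
    have hp0B : p₀ ∈ B := by rw [hB]; exact ⟨0, by simp⟩
    have hσp0 : σ p₀ ∈ B := by
      rw [← hBfix]; exact Set.mem_image_of_mem σ hp0B
    rw [hσM, hB] at hσp0
    obtain ⟨t, ht⟩ := hσp0
    rw [hMp0] at ht
    -- extract component equations
    have hc1 : α * d.1 - β * d.2 = p₀.1 + t * d.1 := by
      have := congrArg Prod.fst ht
      simpa [he] using this
    have hc2 : α * d.2 - β * (-d.1) = p₀.2 + t * d.2 := by
      have := congrArg Prod.snd ht
      simpa [he] using this
    -- p₀ decomposes: p₀.1 = α d.1 + β d.2, p₀.2 = α d.2 - β d.1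
    have hp1 : p₀.1 = α * d.1 + β * d.2 := by
      rw [hα, hβ']; field_simp; ring
    have hp2 : p₀.2 = α * d.2 - β * d.1 := by
      rw [hα, hβ']; field_simp; ring
    have hβ0 : β = 0 := by
      have e1 : 2 * β * d.2 + t * d.1 = 0 := by
        rw [hp1] at hc1; linear_combination -hc1
      have e2 : 2 * β * d.1 - t * d.2 = 0 := by
        rw [hp2] at hc2; linear_combination hc2
      have e3 : 2 * β * (d.1 ^ 2 + d.2 ^ 2) = 0 := by
        linear_combination d.2 * e1 + d.1 * e2
      have := (mul_eq_zero.mp e3).resolve_right hs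
      rcases mul_eq_zero.mp this with h' | h'
      · norm_num at h'
      · exact h'
    -- so p₀.1 * d.2 = p₀.2 * d.1
    have hpd : p₀.1 * d.2 = p₀.2 * d.1 := by
      have : p₀.1 * d.2 - p₀.2 * d.1 = 0 := by
        have := hβ'
        rw [hβ0] at this
        field_simp at this
        linear_combination -this
      linear_combination this
    -- finally: B = T
    rw [hB, hT]
    ext q
    simp only [Set.mem_setOf_eq]
    constructor
    · rintro ⟨t, rfl⟩
      show (b : ℂ) ^ 2 * d.1 * (p₀.1 + t * d.1) + (a : ℂ) ^ 2 * d.2 * (p₀.2 + t * d.2) = 0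
      have key : d.1 * ((b : ℂ) ^ 2 * d.1 * (p₀.1 + t * d.1)
          + (a : ℂ) ^ 2 * d.2 * (p₀.2 + t * d.2)) = 0 := by
        linear_combination (p₀.1 + t * d.1) * hβ - (a : ℂ) ^ 2 * d.2 * hpd
      exact (mul_eq_zero.mp key).resolve_left hd1
    · intro hq
      refine ⟨(q.1 - p₀.1) / d.1, ?_⟩
      have hq12 : q.1 * d.2 = q.2 * d.1 := by
        have key : (b : ℂ) ^ 2 * d.1 * (q.1 * d.2 - q.2 * d.1) = 0 := by
          linear_combination d.2 * hq - q.2 * hβ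
        have := (mul_eq_zero.mp key).resolve_left (by
          exact mul_ne_zero (pow_ne_zero 2 hb0) hd1)
        linear_combination this
      have h1 : q.1 = p₀.1 + (q.1 - p₀.1) / d.1 * d.1 := by field_simp; ring
      have h2 : q.2 = p₀.2 + (q.1 - p₀.1) / d.1 * d.2 := by
        field_simp
        linear_combination hpd - hq12
      exact Prod.ext (by simpa using h1) (by simpa using h2)
end

section
/- Let D be a circle passing through three distinct points of an ellipse E such that at each of these three points the tangent line to D coincides with the tangent line to E. Then E = D, so E is a circle. -/
open Polynomial in
/-- A quartic `K z^4 + u z^3 + v z^2 + w z + K` with double roots at three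
distinct points must be identically zero. -/
lemma quartic_three_double_roots (K u v w : ℂ) (z₁ z₂ z₃ : ℂ)
    (h12 : z₁ ≠ z₂) (h13 : z₁ ≠ z₃) (h23 : z₂ ≠ z₃)
    (he : ∀ z, z = z₁ ∨ z = z₂ ∨ z = z₃ →
      K*z^4 + u*z^3 + v*z^2 + w*z + K = 0)
    (hd : ∀ z, z = z₁ ∨ z = z₂ ∨ z = z₃ →
      4*K*z^3 + 3*u*z^2 + 2*v*z + w = 0) :
    K = 0 ∧ u = 0 ∧ v = 0 ∧ w = 0 := by
  set P : ℂ[X] := C K * X^4 + C u * X^3 + C v * X^2 + C w * X + C K with hP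
  have heval : ∀ z : ℂ, P.eval z = K*z^4 + u*z^3 + v*z^2 + w*z + K := by
    intro z; simp [hP]
  have hder : P.derivative = C (4*K) * X^3 + C (3*u) * X^2 + C (2*v) * X + C w := by
    simp [hP, derivative_X_pow]
    simp only [map_ofNat]
    ring
  have hdeval : ∀ z : ℂ, P.derivative.eval z = 4*K*z^3 + 3*u*z^2 + 2*v*z + w := by
    intro z; rw [hder]; simp
  have hsq : ∀ z, (z = z₁ ∨ z = z₂ ∨ z = z₃) → (X - C z)^2 ∣ P := by
    intro z hz
    have h1 : (X - C z) ∣ P := dvd_iff_isRoot.2 (by simp [IsRoot, heval, he z hz])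
    obtain ⟨Q, hQ⟩ := h1
    have hQz : Q.eval z = 0 := by
      have hdq : P.derivative = Q + (X - C z) * Q.derivative := by
        rw [hQ, derivative_mul]; simp
      have h2 := hdeval z
      rw [hdq] at h2
      simp at h2
      rw [h2]
      exact hd z hz
    obtain ⟨R, hR⟩ := dvd_iff_isRoot.2 hQz
    exact ⟨R, by rw [hQ, hR]; ring⟩
  have cop : ∀ x y : ℂ, x ≠ y → IsCoprime ((X - C x)^2 : ℂ[X]) ((X - C y)^2) := by
    intro x y hxy
    exact (isCoprime_X_sub_C_of_isUnit_sub (isUnit_iff_ne_zero.2 (sub_ne_zero.2 hxy))).pow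
  have hdvd : ((X - C z₁)^2 * ((X - C z₂)^2 * (X - C z₃)^2) : ℂ[X]) ∣ P := by
    apply IsCoprime.mul_dvd
    · exact IsCoprime.mul_right (cop _ _ h12) (cop _ _ h13)
    · exact hsq z₁ (Or.inl rfl)
    · exact IsCoprime.mul_dvd (cop _ _ h23) (hsq z₂ (Or.inr (Or.inl rfl)))
        (hsq z₃ (Or.inr (Or.inr rfl)))
  have hm : ∀ t : ℂ, ((X - C t)^2 : ℂ[X]).Monic := fun t => (monic_X_sub_C t).pow 2
  have hPzero : P = 0 := by
    by_contra hne
    have hdeg : ((X - C z₁)^2 * ((X - C z₂)^2 * (X - C z₃)^2) : ℂ[X]).natDegree ≤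
        P.natDegree := natDegree_le_of_dvd hdvd hne
    have h6 : ((X - C z₁)^2 * ((X - C z₂)^2 * (X - C z₃)^2) : ℂ[X]).natDegree = 6 := by
      rw [(hm z₁).natDegree_mul ((hm z₂).mul (hm z₃)), (hm z₂).natDegree_mul (hm z₃)]
      simp [natDegree_pow, natDegree_X_sub_C]
    have h4 : P.natDegree ≤ 4 := by
      rw [hP]
      compute_degree
    omega
  have c4 := congrArg (fun q : ℂ[X] => q.coeff 4) hPzero
  have c3 := congrArg (fun q : ℂ[X] => q.coeff 3) hPzero
  have c2 := congrArg (fun q : ℂ[X] => q.coeff 2) hPzero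
  have c1 := congrArg (fun q : ℂ[X] => q.coeff 1) hPzero
  simp [hP, coeff_one, coeff_X] at c4 c3 c2 c1
  exact ⟨c4, c3, c2, c1⟩

/-- Evaluation certificate: the quartic vanishes at `c + s i` when the
trig-polynomial `F` vanishes there. -/
lemma quartic_eval_pt (K L M N c s : ℂ) (h1 : c^2 + s^2 = 1)
    (hF : K*c^2 + L*c + M*s + N = 0) :
    K*(c + s*Complex.I)^4 + (2*L - 2*M*Complex.I)*(c + s*Complex.I)^3
      + (2*K + 4*N)*(c + s*Complex.I)^2 + (2*L + 2*M*Complex.I)*(c + s*Complex.I) + K = 0 := by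
  linear_combination (4*(c + s*Complex.I)^2) * hF
    + ((2:ℂ)*M*s + (-2:ℂ)*M*c*Complex.I + (-2:ℂ)*L*s*Complex.I + (-2:ℂ)*L*c + (-1:ℂ)*K + K*s^2 + (-4:ℂ)*K*c*s*Complex.I + (-3:ℂ)*K*c^2) * h1
    + ((2:ℂ)*M*s + (-2:ℂ)*M*s^3 + (-2:ℂ)*M*s^3*Complex.I^2 + (-6:ℂ)*M*c*s^2*Complex.I + (-6:ℂ)*M*c^2*s + (2:ℂ)*L*s^3*Complex.I + (2:ℂ)*L*c*s^2 + (2:ℂ)*K*s^2 + (-1:ℂ)*K*s^4 + K*s^4*Complex.I^2 + (4:ℂ)*K*c*s^3*Complex.I + (2:ℂ)*K*c^2*s^2) * Complex.I_sq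

/-- Derivative certificate: the derivative of the quartic vanishes at `c + s i`
when both `F` and its tangential derivative `H` vanish there. -/
lemma quartic_deriv_pt (K L M N c s : ℂ) (h1 : c^2 + s^2 = 1)
    (hF : K*c^2 + L*c + M*s + N = 0)
    (hH : -2*K*c*s - L*s + M*c = 0) :
    4*K*(c + s*Complex.I)^3 + 3*(2*L - 2*M*Complex.I)*(c + s*Complex.I)^2
      + 2*(2*K + 4*N)*(c + s*Complex.I) + (2*L + 2*M*Complex.I) = 0 := by
  linear_combination (8*(c - s*Complex.I)*(c + s*Complex.I)^2) * hF
    + (-4*Complex.I*(c - s*Complex.I)*(c + s*Complex.I)^2) * hH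
    + ((-8:ℂ)*N*s*Complex.I + (-8:ℂ)*N*c + (-2:ℂ)*M*Complex.I + (-8:ℂ)*M*s^2*Complex.I + (-12:ℂ)*M*c*s + (4:ℂ)*M*c^2*Complex.I + (-2:ℂ)*L + (4:ℂ)*L*s^2 + (-12:ℂ)*L*c*s*Complex.I + (-8:ℂ)*L*c^2 + (-4:ℂ)*K*s*Complex.I + (-4:ℂ)*K*c + (8:ℂ)*K*c*s^2 + (-16:ℂ)*K*c^2*s*Complex.I + (-8:ℂ)*K*c^3) * h1
    + ((8:ℂ)*N*s^3*Complex.I + (8:ℂ)*N*c*s^2 + (-6:ℂ)*M*s^2*Complex.I + (8:ℂ)*M*s^4*Complex.I + (-12:ℂ)*M*c*s + (12:ℂ)*M*c*s^3 + (-4:ℂ)*M*c*s^3*Complex.I^2 + (-4:ℂ)*M*c^2*s^2*Complex.I + (4:ℂ)*M*c^3*s + (6:ℂ)*L*s^2 + (-4:ℂ)*L*s^4 + (4:ℂ)*L*s^4*Complex.I^2 + (12:ℂ)*L*c*s^3*Complex.I + (4:ℂ)*L*c^2*s^2 + (4:ℂ)*K*s^3*Complex.I + (12:ℂ)*K*c*s^2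 + (-8:ℂ)*K*c*s^4 + (8:ℂ)*K*c*s^4*Complex.I^2 + (16:ℂ)*K*c^2*s^3*Complex.I) * Complex.I_sq

/-- If a real circle D passes through three distinct points of a real
ellipse E and at each of these points the tangent line of D coincides with the tangent
line of E (equivalently, the normal directions are proportional), then E = D, so E is a
circle (a = b). -/
theorem circle_tangent_at_three_points (a b : ℝ) (ha : 0 < a) (hb : 0 < b)
    (o : ℝ × ℝ) (ρ : ℝ) (hρ : 0 < ρ)
    (E D : Set (ℝ × ℝ))
    (hE : E = {p : ℝ × ℝ | p.1 ^ 2 / a ^ 2 + p.2 ^ 2 / b ^ 2 = 1})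
    (hD : D = {p : ℝ × ℝ | (p.1 - o.1) ^ 2 + (p.2 - o.2) ^ 2 = ρ ^ 2})
    (p : Fin 3 → ℝ × ℝ) (hinj : Function.Injective p)
    (hmem : ∀ i, p i ∈ E ∧ p i ∈ D)
    (htan : ∀ i, ∃ t : ℝ, t ≠ 0 ∧
      (((p i).1 / a ^ 2, (p i).2 / b ^ 2) : ℝ × ℝ) = t • (p i - o)) :
    E = D ∧ a = b := by
  have ha' : a ≠ 0 := ne_of_gt ha
  have hb' : b ≠ 0 := ne_of_gt hb
  -- normalized coordinates on the unit circle
  set c : Fin 3 → ℝ := fun i => (p i).1 / a with hc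
  set s : Fin 3 → ℝ := fun i => (p i).2 / b with hs
  have hxa : ∀ i, (p i).1 = a * c i := by intro i; simp only [hc]; field_simp
  have hya : ∀ i, (p i).2 = b * s i := by intro i; simp only [hs]; field_simp
  -- trig-polynomial coefficients
  set K : ℝ := a^2 - b^2 with hK
  set L : ℝ := -2*a*o.1 with hL
  set M : ℝ := -2*b*o.2 with hM
  set N : ℝ := b^2 + o.1^2 + o.2^2 - ρ^2 with hN
  have h1 : ∀ i, c i ^ 2 + s i ^ 2 = 1 := by
    intro i
    have hEi := (hmem i).1
    rw [hE] at hEi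
    simp only [Set.mem_setOf_eq] at hEi
    calc c i ^ 2 + s i ^ 2 = (p i).1^2 / a^2 + (p i).2^2 / b^2 := by
          simp only [hc, hs]; ring
      _ = 1 := hEi
  have hF : ∀ i, K * c i ^ 2 + L * c i + M * s i + N = 0 := by
    intro i
    have hDi := (hmem i).2
    rw [hD] at hDi
    simp only [Set.mem_setOf_eq] at hDi
    rw [hxa i, hya i] at hDi
    simp only [hK, hL, hM, hN]
    linear_combination hDi - b^2 * h1 i
  have hH : ∀ i, -2 * K * c i * s i - L * s i + M * c i = 0 := by
    intro i
    obtain ⟨t, _, ht⟩ := htan i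
    have hx : (p i).1 / a^2 = t * ((p i).1 - o.1) := by
      have := congrArg Prod.fst ht
      simpa [Prod.smul_def] using this
    have hy : (p i).2 / b^2 = t * ((p i).2 - o.2) := by
      have := congrArg Prod.snd ht
      simpa [Prod.smul_def] using this
    -- cross product: eliminate t
    have hcrossP : (p i).1 * b^2 * ((p i).2 - o.2) = (p i).2 * a^2 * ((p i).1 - o.1) := by
      calc (p i).1 * b^2 * ((p i).2 - o.2)
          = ((p i).1 / a^2) * ((p i).2 - o.2) * (a^2 * b^2) := by field_simp
        _ = (t * ((p i).1 - o.1)) * ((p i).2 - o.2) * (a^2 * b^2) := by rw [hx]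
        _ = (t * ((p i).2 - o.2)) * ((p i).1 - o.1) * (a^2 * b^2) := by ring
        _ = ((p i).2 / b^2) * ((p i).1 - o.1) * (a^2 * b^2) := by rw [hy]
        _ = (p i).2 * a^2 * ((p i).1 - o.1) := by field_simp
    have key2 : -2*K*((p i).1)*((p i).2) + 2*a^2*o.1*((p i).2) - 2*b^2*o.2*((p i).1) = 0 := by
      simp only [hK]
      linear_combination 2 * hcrossP
    have hid : -2*K*(c i)*(s i) - L*(s i) + M*(c i)
        = (-2*K*((p i).1)*((p i).2) + 2*a^2*o.1*((p i).2) - 2*b^2*o.2*((p i).1)) / (a*b) := by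
      simp only [hc, hs, hL, hM]
      field_simp
      ring
    rw [hid, key2, zero_div]
  -- pass to complex quartic
  set z : Fin 3 → ℂ := fun i => (c i : ℂ) + (s i : ℂ) * Complex.I with hz
  have hzinj : Function.Injective z := by
    intro i j hij
    apply hinj
    have hre := congrArg Complex.re hij
    have him := congrArg Complex.im hij
    simp [hz] at hre him
    have e1 : (p i).1 = (p j).1 := by
      rw [hxa i, hxa j, hre]
    have e2 : (p i).2 = (p j).2 := by
      rw [hya i, hya j, him]
    exact Prod.ext e1 e2
  have key : (K:ℂ) = 0 ∧ (2*(L:ℂ) - 2*(M:ℂ)*Complex.I) = 0 ∧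
      (2*(K:ℂ) + 4*(N:ℂ)) = 0 ∧ (2*(L:ℂ) + 2*(M:ℂ)*Complex.I) = 0 := by
    have h1C : ∀ i, ((c i : ℝ) : ℂ)^2 + ((s i : ℝ) : ℂ)^2 = 1 := by
      intro i; exact_mod_cast h1 i
    have hFC : ∀ i, (K:ℂ) * ((c i : ℝ):ℂ)^2 + (L:ℂ) * ((c i : ℝ):ℂ)
        + (M:ℂ) * ((s i : ℝ):ℂ) + (N:ℂ) = 0 := by
      intro i; exact_mod_cast hF i
    have hHC : ∀ i, -2*(K:ℂ) * ((c i : ℝ):ℂ) * ((s i : ℝ):ℂ) - (L:ℂ) * ((s i : ℝ):ℂ)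
        + (M:ℂ) * ((c i : ℝ):ℂ) = 0 := by
      intro i; exact_mod_cast hH i
    have hne : ∀ i j : Fin 3, i ≠ j → z i ≠ z j := fun i j hij h => hij (hzinj h)
    apply quartic_three_double_roots ((K:ℂ)) _ _ _ (z 0) (z 1) (z 2)
      (hne 0 1 (by decide)) (hne 0 2 (by decide)) (hne 1 2 (by decide))
    · intro w hw
      rcases hw with h | h | h <;>
        · subst h
          exact quartic_eval_pt _ _ _ _ _ _ (h1C _) (hFC _)
    · intro w hw
      rcases hw with h | h | h <;>
        · subst h
          exact quartic_deriv_pt _ _ _ _ _ _ (h1C _) (hFC _) (hHC _)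
  obtain ⟨hK0, hu0, hv0, -⟩ := key
  have hKr : K = 0 := by exact_mod_cast hK0
  have hLr : L = 0 := by
    have h := congrArg Complex.re hu0
    simp at h
    linarith
  have hMr : M = 0 := by
    have h := congrArg Complex.im hu0
    simp at h
    linarith
  have hNr : N = 0 := by
    have h4 : (N:ℂ) = 0 := by linear_combination hv0 / 4 - hK0 / 2
    exact_mod_cast h4
  -- decode the real conditions
  have hab : a = b := by
    have h0 : (a - b) * (a + b) = 0 := by
      have : a^2 - b^2 = 0 := by rw [hK] at hKr; linarith
      linear_combination this
    rcases mul_eq_zero.mp h0 with h | h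
    · linarith
    · linarith
  have ho1 : o.1 = 0 := by
    rw [hL] at hLr
    have h2 : (2*a) * o.1 = 0 := by linear_combination -hLr
    rcases mul_eq_zero.mp h2 with h | h
    · linarith
    · exact h
  have ho2 : o.2 = 0 := by
    rw [hM] at hMr
    have h2 : (2*b) * o.2 = 0 := by linear_combination -hMr
    rcases mul_eq_zero.mp h2 with h | h
    · linarith
    · exact h
  have hρb : ρ^2 = b^2 := by
    rw [hN, ho1, ho2] at hNr; linarith
  refine ⟨?_, hab⟩
  rw [hE, hD]
  ext q
  simp only [Set.mem_setOf_eq, ho1, ho2, sub_zero]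
  rw [hab, hρb, ← add_div, div_eq_one_iff_eq (pow_ne_zero 2 hb')]
end
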